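/- Let k > 1 be real and let N ≥ 2 be an integer. If p_N equals the first k-Ramanujan prime R₁⁽ᵏ⁾, then for every integer n ≥ N one has p_{n+1}/p_n ≤ k, and moreover p_N/p_{N−1} > k. -/

import Mathlib

open Real

/-- The prime counting function `π` extended to the reals:
`primePi x` is the number of primes `p ≤ x`. -/
noncomputable def primePi (x : ℝ) : ℕ := Nat.primeCounting ⌊x⌋₊

/-- The first `k`-Ramanujan prime `R₁⁽ᵏ⁾`: the least positive integer `m` such that
`π(x) - π(x/k) ≥ 1` for every real `x ≥ m`. -/
noncomputable def firstRamanujanPrime (k : ℝ) : ℕ :=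
  sInf {m : ℕ | 0 < m ∧ ∀ x : ℝ, (m : ℝ) ≤ x → primePi (x / k) < primePi x}

/-- The `n`-th prime number, with `nthPrime 1 = 2`, `nthPrime 2 = 3`, … -/
noncomputable def nthPrime (n : ℕ) : ℕ := Nat.nth Nat.Prime (n - 1)

private lemma prime_nth (i : ℕ) : Nat.Prime (Nat.nth Nat.Prime i) :=
  Nat.nth_mem_of_infinite Nat.infinite_setOf_prime i

private lemma primePi_eq_count (x : ℝ) : primePi x = Nat.count Nat.Prime (⌊x⌋₊ + 1) := rfl

private lemma primePi_between (i : ℕ) {x : ℝ} (h1 : (Nat.nth Nat.Prime i : ℝ) ≤ x)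
    (h2 : x < (Nat.nth Nat.Prime (i + 1) : ℝ)) : primePi x = i + 1 := by
  have hx0 : (0 : ℝ) ≤ x := le_trans (by positivity) h1
  have hl : Nat.nth Nat.Prime i ≤ ⌊x⌋₊ := Nat.le_floor h1
  have hu : ⌊x⌋₊ < Nat.nth Nat.Prime (i + 1) := by
    rw [Nat.floor_lt hx0]; exact h2
  rw [primePi_eq_count]
  refine le_antisymm ?_ ?_
  · calc Nat.count Nat.Prime (⌊x⌋₊ + 1) ≤ Nat.count Nat.Prime (Nat.nth Nat.Prime (i + 1)) :=
        Nat.count_monotone _ hu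
    _ = i + 1 := Nat.count_nth_of_infinite Nat.infinite_setOf_prime _
  · calc i + 1 = Nat.count Nat.Prime (Nat.nth Nat.Prime i + 1) :=
        (Nat.count_nth_succ_of_infinite Nat.infinite_setOf_prime _).symm
    _ ≤ Nat.count Nat.Prime (⌊x⌋₊ + 1) := Nat.count_monotone _ (by omega)

private lemma primePi_le_of_lt (i : ℕ) {x : ℝ} (h2 : x < (Nat.nth Nat.Prime i : ℝ)) :
    primePi x ≤ i := by
  have hu : ⌊x⌋₊ < Nat.nth Nat.Prime i := by
    rw [Nat.floor_lt' (prime_nth i).pos.ne']; exact h2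
  rw [primePi_eq_count]
  calc Nat.count Nat.Prime (⌊x⌋₊ + 1) ≤ Nat.count Nat.Prime (Nat.nth Nat.Prime i) :=
      Nat.count_monotone _ hu
  _ = i := Nat.count_nth_of_infinite Nat.infinite_setOf_prime _

theorem first_k_ramanujan_stmt4 (k : ℝ) (hk : 1 < k) (N : ℕ) (hN : 2 ≤ N)
    (h : nthPrime N = firstRamanujanPrime k) :
    (∀ n : ℕ, N ≤ n → (nthPrime (n + 1) : ℝ) / (nthPrime n : ℝ) ≤ k) ∧
      k < (nthPrime N : ℝ) / (nthPrime (N - 1) : ℝ) := by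
  obtain ⟨M, rfl⟩ : ∃ M, N = M + 2 := ⟨N - 2, by omega⟩
  set S : Set ℕ := {m : ℕ | 0 < m ∧ ∀ x : ℝ, (m : ℝ) ≤ x → primePi (x / k) < primePi x} with hS
  have hk0 : (0 : ℝ) < k := lt_trans one_pos hk
  have hprime : ∀ i, Nat.Prime (Nat.nth Nat.Prime i) := prime_nth
  have hnthpos : ∀ i, 0 < Nat.nth Nat.Prime i := fun i => (hprime i).pos
  have hmono : ∀ {i j : ℕ}, i ≤ j → Nat.nth Nat.Prime i ≤ Nat.nth Nat.Prime j := fun hij =>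
    (Nat.nth_le_nth Nat.infinite_setOf_prime).mpr hij
  have hNP : nthPrime (M + 2) = Nat.nth Nat.Prime (M + 1) := rfl
  -- S is nonempty, so its infimum is a member
  have hSne : S.Nonempty := by
    by_contra hne
    rw [Set.not_nonempty_iff_eq_empty] at hne
    have : firstRamanujanPrime k = 0 := by
      rw [firstRamanujanPrime, ← hS, hne, Nat.sInf_empty]
    rw [this] at h
    exact absurd h (by simpa [hNP] using (hnthpos (M + 1)).ne')
  have hmem : nthPrime (M + 2) ∈ S := by
    rw [h]; exact Nat.sInf_mem hSne
  constructor
  · -- part 1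
    intro n hn
    obtain ⟨j, rfl⟩ : ∃ j, n = j + 2 := ⟨n - 2, by omega⟩
    have hjM : M ≤ j := by omega
    have hpn : nthPrime (j + 2) = Nat.nth Nat.Prime (j + 1) := rfl
    have hpn1 : nthPrime (j + 2 + 1) = Nat.nth Nat.Prime (j + 2) := rfl
    rw [hpn, hpn1]
    have hpnpos : (0 : ℝ) < (Nat.nth Nat.Prime (j + 1) : ℝ) := by
      exact_mod_cast hnthpos (j + 1)
    rw [div_le_iff₀ hpnpos]
    by_contra hcon
    push_neg at hcon
    -- take x = k * p_n
    set x : ℝ := k * (Nat.nth Nat.Prime (j + 1) : ℝ) with hx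
    have hxge : (nthPrime (M + 2) : ℝ) ≤ x := by
      rw [hNP]
      have h1 : (Nat.nth Nat.Prime (M + 1) : ℝ) ≤ (Nat.nth Nat.Prime (j + 1) : ℝ) := by
        exact_mod_cast hmono (by omega)
      nlinarith
    have hlt := hmem.2 x hxge
    have hxk : x / k = (Nat.nth Nat.Prime (j + 1) : ℝ) := by
      field_simp [hx]
      exact hx
    have h1 : primePi (x / k) = j + 2 := by
      rw [hxk]
      refine primePi_between (j + 1) le_rfl ?_
      exact_mod_cast (Nat.nth_lt_nth Nat.infinite_setOf_prime).mpr (by omega)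
    have h2 : primePi x = j + 2 := by
      refine primePi_between (j + 1) ?_ hcon
      nlinarith
    omega
  · -- part 2
    have hp1 : nthPrime (M + 2 - 1) = Nat.nth Nat.Prime M := rfl
    rw [hNP, hp1]
    have hppos : (0 : ℝ) < (Nat.nth Nat.Prime M : ℝ) := by exact_mod_cast hnthpos M
    rw [lt_div_iff₀ hppos]
    by_contra hcon
    push_neg at hcon
    -- then p_{N-1} ∈ S, contradicting minimality
    have hmem' : Nat.nth Nat.Prime M ∈ S := by
      refine ⟨hnthpos M, fun x hx => ?_⟩
      by_cases hcase : (nthPrime (M + 2) : ℝ) ≤ x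
      · exact hmem.2 x hcase
      · push_neg at hcase
        rw [hNP] at hcase
        have h2 : primePi x = M + 1 := primePi_between M hx hcase
        have h3 : primePi (x / k) ≤ M := by
          refine primePi_le_of_lt M ?_
          rw [div_lt_iff₀ hk0]
          calc x < (Nat.nth Nat.Prime (M + 1) : ℝ) := hcase
          _ ≤ (Nat.nth Nat.Prime M : ℝ) * k := by linarith [hcon]
        omega
    have hle : sInf S ≤ Nat.nth Nat.Prime M := Nat.sInf_le hmem'
    have hlt : Nat.nth Nat.Prime M < nthPrime (M + 2) := by
      rw [hNP]
      exact (Nat.nth_lt_nth Nat.infinite_setOf_prime).mpr (by omega)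
    rw [h] at hlt
    exact absurd hle (by rw [firstRamanujanPrime, ← hS] at hlt; omega)
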